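/- Let R be a commutative ring with identity. If for some N ≥ n there exists a left-invertible N×n Vandermonde matrix over R, then the ideal of R generated by the determinants of all n×n Vandermonde matrices is the unit ideal. -/

import Mathlib

theorem stmt_7 {R : Type*} [CommRing R] (n N : ℕ) (hN : n ≤ N)
    (v : Fin N → R) (L : Matrix (Fin n) (Fin N) R)
    (hL : L * Matrix.of (fun (i : Fin N) (j : Fin n) => v i ^ (j : ℕ)) = 1) :
    Ideal.span {d : R | ∃ w : Fin n → R, d = (Matrix.vandermonde w).det} = ⊤ := by
  classical
  by_contra hspan
  obtain ⟨m, hm, hle⟩ := Ideal.exists_le_maximal _ hspan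
  haveI := hm
  letI : Field (R ⧸ m) := Ideal.Quotient.field m
  set f := Ideal.Quotient.mk m with hf
  have key : ∀ w : Fin n → R ⧸ m, (Matrix.vandermonde w).det = 0 := by
    intro w
    choose w' hw' using fun j => Ideal.Quotient.mk_surjective (w j)
    have hmem : (Matrix.vandermonde w').det ∈ m :=
      hle (Ideal.subset_span ⟨w', rfl⟩)
    have h0 : f (Matrix.vandermonde w').det = 0 := (Ideal.Quotient.eq_zero_iff_mem).2 hmem
    rw [RingHom.map_det] at h0
    have hmap : (Matrix.vandermonde w').map f = Matrix.vandermonde w := by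
      ext i j
      simp [Matrix.vandermonde, map_pow, hw', hf]
    rwa [RingHom.mapMatrix_apply, hmap] at h0
  have hnotinj : ∀ w : Fin n → R ⧸ m, ¬ Function.Injective w := by
    intro w hw
    exact (Matrix.det_vandermonde_ne_zero_iff.2 hw) (key w)
  set S : Finset (R ⧸ m) := Finset.univ.image (fun i => f (v i)) with hS
  have hcard : S.card < n := by
    by_contra h
    push_neg at h
    obtain ⟨T, hTS, hTcard⟩ := Finset.exists_subset_card_eq h
    refine hnotinj (fun j : Fin n => ((T.equivFin.symm (Fin.cast hTcard.symm j)) : R ⧸ m)) ?_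
    exact Subtype.val_injective.comp (T.equivFin.symm.injective.comp (Fin.cast_injective _))
  set p : Polynomial (R ⧸ m) := ∏ s ∈ S, (Polynomial.X - Polynomial.C s) with hp
  have hmonic : p.Monic := Polynomial.monic_prod_of_monic _ _ fun s _ => Polynomial.monic_X_sub_C s
  have hdeg : p.natDegree = S.card := by
    rw [hp, Polynomial.natDegree_prod _ _ fun s _ => Polynomial.X_sub_C_ne_zero s]
    simp [Polynomial.natDegree_X_sub_C]
  have hdeg' : p.natDegree < n := hdeg ▸ hcard
  set x : Fin n → R ⧸ m := fun j => p.coeff j with hx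
  have hx0 : x ⟨p.natDegree, hdeg'⟩ = 1 := by
    simpa [hx] using hmonic.coeff_natDegree
  set V' := (Matrix.of fun (i : Fin N) (j : Fin n) => v i ^ (j : ℕ)).map f with hV'
  have hVx : V'.mulVec x = 0 := by
    funext i
    have hroot : p.eval (f (v i)) = 0 := by
      have hmemS : f (v i) ∈ S := Finset.mem_image_of_mem _ (Finset.mem_univ i)
      rw [hp, Polynomial.eval_prod]
      exact Finset.prod_eq_zero hmemS (by simp)
    have heval := Polynomial.eval_eq_sum_range' hdeg' (f (v i))
    calc V'.mulVec x i = ∑ j : Fin n, f (v i) ^ (j : ℕ) * p.coeff j := by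
          simp [Matrix.mulVec, dotProduct, hV', hx, map_pow]
      _ = ∑ j ∈ Finset.range n, f (v i) ^ j * p.coeff j := by
          rw [← Fin.sum_univ_eq_sum_range]
      _ = p.eval (f (v i)) := by
          rw [heval]; exact Finset.sum_congr rfl fun j _ => mul_comm _ _
      _ = 0 := hroot
  have hL' : L.map f * V' = 1 := by
    rw [hV', ← Matrix.map_mul, hL, Matrix.map_one f (map_zero f) (map_one f)]
  have hx0' : x = 0 := by
    have h1 : (L.map f).mulVec (V'.mulVec x) = x := by
      rw [Matrix.mulVec_mulVec, hL', Matrix.one_mulVec]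
    rw [hVx, Matrix.mulVec_zero] at h1
    exact h1.symm
  rw [hx0'] at hx0
  exact zero_ne_one hx0
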